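/- Every nonzero multiplicative linear functional ω on the Banach algebra C_r(𝕋ⁿ) maps each generator T_{e_i} into the unit circle; consequently every such ω is given by a point evaluation on 𝕋ⁿ composed with the symbol map, and the maximal ideal space of C_r(𝕋ⁿ) is 𝕋ⁿ. -/

import Mathlib

open MeasureTheory FourierTransform

noncomputable section

/-- The relativistic energy `E(p) = √(|p|² + m²)`. -/
def energy {n : ℕ} (m : ℝ) (p : EuclideanSpace ℝ (Fin n)) : ℝ :=
  Real.sqrt (‖p‖ ^ 2 + m ^ 2)

/-- The measure `dp/E(p)` on `ℝⁿ`, so `L²_r(ℝⁿ) = L²(μᵣ)`. -/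
def rMeasure {n : ℕ} (m : ℝ) : Measure (EuclideanSpace ℝ (Fin n)) :=
  volume.withDensity fun p => ENNReal.ofReal (1 / energy m p)

/-- The relativistic momentum Hilbert space `L²_r(ℝⁿ)`. -/
abbrev L2r (n : ℕ) (m : ℝ) := Lp ℂ 2 (rMeasure (n := n) m)

/-- `T` is (a bounded realization of) the translation `T_a φ(p) = φ(p−a)` on `L²_r(ℝⁿ)`. -/
def IsTransl {n : ℕ} (m : ℝ) (a : EuclideanSpace ℝ (Fin n))
    (T : L2r n m →L[ℂ] L2r n m) : Prop :=
  ∀ φ : L2r n m, (T φ : EuclideanSpace ℝ (Fin n) → ℂ) =ᵐ[rMeasure m] fun p => φ (p - a)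

/-- `L^∞_r(ℝⁿ)`: the commutant of the translations in `B(L²_r(ℝⁿ))`. -/
def Linftyr (n : ℕ) (m : ℝ) : Set (L2r n m →L[ℂ] L2r n m) :=
  {A | ∀ (a : EuclideanSpace ℝ (Fin n)) (T : L2r n m →L[ℂ] L2r n m),
    IsTransl m a T → A.comp T = T.comp A}

/-- `g` is the symbol of `A ∈ B(L²_r(ℝⁿ))`: the restriction of `A` to `L²(ℝⁿ)` acts as
multiplication by `g` in the position (inverse Fourier) picture, i.e. `A ψ̂ = (g·ψ)^`
for ψ in the dense class `L¹ ∩ L²`. -/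
def IsSymbol {n : ℕ} (m : ℝ) (A : L2r n m →L[ℂ] L2r n m)
    (g : EuclideanSpace ℝ (Fin n) → ℂ) : Prop :=
  ∀ ψ : EuclideanSpace ℝ (Fin n) → ℂ, Integrable ψ → MemLp ψ 2 volume →
    ∀ φ : L2r n m, (φ : EuclideanSpace ℝ (Fin n) → ℂ) =ᵐ[volume] 𝓕 ψ →
      (A φ : EuclideanSpace ℝ (Fin n) → ℂ) =ᵐ[volume] 𝓕 fun x => g x * ψ x

/-- The Banach algebra `C_r(𝕋ⁿ)`: the operator-norm closure in `B(L²_r(ℝⁿ))` of the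
(algebraic) span of the integer translations `T_a`, `a ∈ ℤⁿ` (which is the algebra they
generate, since `T_a T_b = T_{a+b}` and `T_0 = 1`). -/
def CrTorus (n : ℕ) (m : ℝ) : Subalgebra ℂ (L2r n m →L[ℂ] L2r n m) :=
  (Algebra.adjoin ℂ
    {T | ∃ a : Fin n → ℤ,
      IsTransl m ((WithLp.equiv 2 (Fin n → ℝ)).symm fun i => (a i : ℝ)) T}).topologicalClosure


open scoped ENNReal

set_option maxHeartbeats 1000000
set_option synthInstance.maxHeartbeats 2000000

variable {n : ℕ} {m : ℝ}

lemma energy_pos (hm : 0 < m) (p : EuclideanSpace ℝ (Fin n)) : 0 < energy m p := by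
  have : 0 < ‖p‖ ^ 2 + m ^ 2 := by positivity
  exact Real.sqrt_pos.2 this

lemma m_le_energy (hm : 0 < m) (p : EuclideanSpace ℝ (Fin n)) : m ≤ energy m p := by
  have : m = Real.sqrt (m ^ 2) := (Real.sqrt_sq hm.le).symm
  rw [this, energy]
  apply Real.sqrt_le_sqrt
  nlinarith [sq_nonneg ‖p‖, Real.sq_sqrt (sq_nonneg m)]

lemma energy_le (hm : 0 < m) (a p : EuclideanSpace ℝ (Fin n)) :
    energy m p ≤ (1 + ‖a‖ / m) * energy m (p + a) := by
  have h1 : energy m p ≤ energy m (p + a) + ‖a‖ := by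
    rw [energy, energy]
    rw [show Real.sqrt (‖p + a‖ ^ 2 + m ^ 2) + ‖a‖ =
      Real.sqrt ((Real.sqrt (‖p + a‖ ^ 2 + m ^ 2) + ‖a‖) ^ 2) from
        (Real.sqrt_sq (by positivity)).symm]
    apply Real.sqrt_le_sqrt
    have hnp : ‖p‖ ≤ ‖p + a‖ + ‖a‖ := by
      calc ‖p‖ = ‖p + a + -a‖ := by rw [add_neg_cancel_right]
      _ ≤ ‖p + a‖ + ‖-a‖ := norm_add_le _ _
      _ = ‖p + a‖ + ‖a‖ := by rw [norm_neg]
    have hs : 0 ≤ Real.sqrt (‖p + a‖ ^ 2 + m ^ 2) := Real.sqrt_nonneg _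
    have hsq : Real.sqrt (‖p + a‖ ^ 2 + m ^ 2) ^ 2 = ‖p + a‖ ^ 2 + m ^ 2 :=
      Real.sq_sqrt (by positivity)
    have hle : ‖p + a‖ ≤ Real.sqrt (‖p + a‖ ^ 2 + m ^ 2) := by
      nlinarith [hsq, hs, sq_nonneg m, norm_nonneg (p + a)]
    nlinarith [norm_nonneg p, norm_nonneg a, norm_nonneg (p + a)]
  have h2 : energy m (p + a) + ‖a‖ ≤ (1 + ‖a‖ / m) * energy m (p + a) := by
    have hE := m_le_energy hm (p + a)
    have : ‖a‖ / m * m = ‖a‖ := div_mul_cancel₀ _ hm.ne'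
    have hna : 0 ≤ ‖a‖ := norm_nonneg a
    have h3 : ‖a‖ / m * m ≤ ‖a‖ / m * energy m (p + a) :=
      mul_le_mul_of_nonneg_left hE (by positivity)
    nlinarith
  linarith


lemma energy_continuous (hm : 0 < m) : Continuous (energy (n := n) m) := by
  apply Real.continuous_sqrt.comp
  continuity

lemma density_measurable (hm : 0 < m) :
    Measurable fun p : EuclideanSpace ℝ (Fin n) => ENNReal.ofReal (1 / energy m p) := by
  apply ENNReal.measurable_ofReal.comp
  exact (continuous_const.div (energy_continuous hm) fun p => (energy_pos hm p).ne').measurable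

lemma rMeasure_ac (hm : 0 < m) : rMeasure (n := n) m ≪ volume :=
  withDensity_absolutelyContinuous _ _

lemma volume_ac (hm : 0 < m) : volume ≪ rMeasure (n := n) m := by
  apply withDensity_absolutelyContinuous' (density_measurable hm).aemeasurable
  filter_upwards with p
  simp only [ne_eq, ENNReal.ofReal_eq_zero, not_le]
  exact div_pos one_pos (energy_pos hm p)

lemma lintegral_translate (hm : 0 < m) (a : EuclideanSpace ℝ (Fin n))
    {f : EuclideanSpace ℝ (Fin n) → ℝ≥0∞} (hf : AEMeasurable f volume) :
    ∫⁻ p, f (p - a) ∂(rMeasure m) ≤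
      ENNReal.ofReal (1 + ‖a‖ / m) * ∫⁻ p, f p ∂(rMeasure m) := by
  set w : EuclideanSpace ℝ (Fin n) → ℝ≥0∞ := fun p => ENNReal.ofReal (1 / energy m p) with hw
  have hwm : Measurable w := density_measurable hm
  have hfa : AEMeasurable (fun p => f (p - a)) volume :=
    hf.comp_quasiMeasurePreserving (measurePreserving_sub_right volume a).quasiMeasurePreserving
  rw [rMeasure, lintegral_withDensity_eq_lintegral_mul₀ hwm.aemeasurable hfa,
    lintegral_withDensity_eq_lintegral_mul₀ hwm.aemeasurable hf]
  have hmap : ∫⁻ p, (w * fun p => f (p - a)) p ∂volume =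
      ∫⁻ q, w (q + a) * f q ∂volume := by
    have hMP : MeasurePreserving (fun q : EuclideanSpace ℝ (Fin n) => q + a) volume volume :=
      measurePreserving_add_right volume a
    have := (hMP.lintegral_comp_emb (MeasurableEquiv.addRight a).measurableEmbedding
      (fun p => (w * fun p => f (p - a)) p)).symm
    rw [this]
    congr 1
    funext q
    simp [MeasurableEquiv.addRight]
  rw [hmap]
  calc ∫⁻ q, w (q + a) * f q ∂volume
      ≤ ∫⁻ q, (ENNReal.ofReal (1 + ‖a‖ / m) * w q) * f q ∂volume := by
        apply lintegral_mono
        intro q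
        apply mul_le_mul_left
        have h1 := energy_pos hm q
        have h2 := energy_pos hm (q + a)
        have hna : (0:ℝ) ≤ ‖a‖ / m := by positivity
        rw [hw, ← ENNReal.ofReal_mul (by linarith)]
        apply ENNReal.ofReal_le_ofReal
        rw [mul_one_div, div_le_div_iff₀ h2 h1, one_mul]
        exact energy_le hm a q
    _ = ENNReal.ofReal (1 + ‖a‖ / m) * ∫⁻ q, (w * f) q ∂volume := by
        simp_rw [mul_assoc]
        rw [lintegral_const_mul' _ _ ENNReal.ofReal_ne_top]
        rfl


namespace CrProof

lemma aesm_translate (hm : 0 < m) (a : EuclideanSpace ℝ (Fin n))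
    {f : EuclideanSpace ℝ (Fin n) → ℂ} (hf : AEStronglyMeasurable f (rMeasure m)) :
    AEStronglyMeasurable (fun p => f (p - a)) (rMeasure m) := by
  have h1 : AEStronglyMeasurable f volume := hf.mono_ac (volume_ac hm)
  have h2 : AEStronglyMeasurable (fun p => f (p - a)) volume :=
    h1.comp_quasiMeasurePreserving
      (measurePreserving_sub_right volume a).quasiMeasurePreserving
  exact h2.mono_ac (rMeasure_ac hm)

lemma ae_translate (hm : 0 < m) (a : EuclideanSpace ℝ (Fin n))
    {f g : EuclideanSpace ℝ (Fin n) → ℂ} (h : f =ᵐ[rMeasure m] g) :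
    (fun p => f (p - a)) =ᵐ[rMeasure m] fun p => g (p - a) := by
  have h1 : f =ᵐ[volume] g := (volume_ac hm).ae_eq h
  have h2 := (measurePreserving_sub_right volume a).quasiMeasurePreserving.ae_eq h1
  exact (rMeasure_ac hm).ae_eq h2

lemma eLpNorm_translate_le (hm : 0 < m) (a : EuclideanSpace ℝ (Fin n))
    {f : EuclideanSpace ℝ (Fin n) → ℂ} (hf : AEStronglyMeasurable f (rMeasure m)) :
    eLpNorm (fun p => f (p - a)) 2 (rMeasure m) ≤
      ENNReal.ofReal (Real.sqrt (1 + ‖a‖ / m)) * eLpNorm f 2 (rMeasure m) := by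
  rw [eLpNorm_eq_lintegral_rpow_enorm_toReal (by norm_num) (by norm_num),
    eLpNorm_eq_lintegral_rpow_enorm_toReal (by norm_num) (by norm_num)]
  simp only [ENNReal.toReal_ofNat]
  have hfv : AEMeasurable (fun p => (‖f p‖₊ : ℝ≥0∞) ^ (2:ℝ)) volume := by
    have : AEStronglyMeasurable f volume := hf.mono_ac (volume_ac hm)
    exact (this.enorm.pow_const _)
  have key := lintegral_translate hm a hfv
  have hC : (0:ℝ) ≤ 1 + ‖a‖ / m := by positivity
  calc (∫⁻ p, (‖f (p - a)‖₊ : ℝ≥0∞) ^ (2:ℝ) ∂rMeasure m) ^ (1/(2:ℝ))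
      ≤ (ENNReal.ofReal (1 + ‖a‖ / m) * ∫⁻ p, (‖f p‖₊ : ℝ≥0∞) ^ (2:ℝ) ∂rMeasure m) ^ (1/(2:ℝ)) :=
        ENNReal.rpow_le_rpow key (by norm_num)
    _ = ENNReal.ofReal (1 + ‖a‖ / m) ^ (1/(2:ℝ)) *
        (∫⁻ p, (‖f p‖₊ : ℝ≥0∞) ^ (2:ℝ) ∂rMeasure m) ^ (1/(2:ℝ)) :=
        ENNReal.mul_rpow_of_nonneg _ _ (by norm_num)
    _ = ENNReal.ofReal (Real.sqrt (1 + ‖a‖ / m)) *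
        (∫⁻ p, (‖f p‖₊ : ℝ≥0∞) ^ (2:ℝ) ∂rMeasure m) ^ (1/(2:ℝ)) := by
        rw [ENNReal.ofReal_rpow_of_nonneg hC (by norm_num), Real.sqrt_eq_rpow]

lemma memℒp_translate (hm : 0 < m) (a : EuclideanSpace ℝ (Fin n)) (φ : L2r n m) :
    MemLp (fun p => (φ : EuclideanSpace ℝ (Fin n) → ℂ) (p - a)) 2 (rMeasure m) := by
  refine ⟨aesm_translate hm a (Lp.aestronglyMeasurable φ), ?_⟩
  calc eLpNorm (fun p => (φ : EuclideanSpace ℝ (Fin n) → ℂ) (p - a)) 2 (rMeasure m)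
      ≤ ENNReal.ofReal (Real.sqrt (1 + ‖a‖ / m)) * eLpNorm (φ : EuclideanSpace ℝ (Fin n) → ℂ) 2 (rMeasure m) :=
        eLpNorm_translate_le hm a (Lp.aestronglyMeasurable φ)
    _ < ⊤ := ENNReal.mul_lt_top ENNReal.ofReal_lt_top (Lp.eLpNorm_lt_top φ)

end CrProof

namespace CrProof

/-- Helper: package a `MemLp` witness into `L2r`. -/
def mk2 {f : EuclideanSpace ℝ (Fin n) → ℂ} (h : MemLp f 2 (rMeasure m)) : L2r n m :=
  h.toLp f

lemma mk2_coe {f : EuclideanSpace ℝ (Fin n) → ℂ} (h : MemLp f 2 (rMeasure m)) :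
    (mk2 h : EuclideanSpace ℝ (Fin n) → ℂ) =ᵐ[rMeasure m] f :=
  MemLp.coeFn_toLp h

lemma mk2_congr {f g : EuclideanSpace ℝ (Fin n) → ℂ} (hf : MemLp f 2 (rMeasure m))
    (hg : MemLp g 2 (rMeasure m)) (h : f =ᵐ[rMeasure m] g) : mk2 hf = mk2 hg :=
  MemLp.toLp_congr _ _ h

lemma mk2_add {f g : EuclideanSpace ℝ (Fin n) → ℂ} (hf : MemLp f 2 (rMeasure m))
    (hg : MemLp g 2 (rMeasure m)) : mk2 (hf.add hg) = mk2 hf + mk2 hg :=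
  MemLp.toLp_add _ _

lemma mk2_smul {f : EuclideanSpace ℝ (Fin n) → ℂ} (hf : MemLp f 2 (rMeasure m)) (c : ℂ) :
    mk2 (hf.const_smul c) = c • mk2 hf :=
  MemLp.toLp_const_smul _ _

lemma mk2_norm {f : EuclideanSpace ℝ (Fin n) → ℂ} (hf : MemLp f 2 (rMeasure m)) :
    ‖mk2 hf‖ = (eLpNorm f 2 (rMeasure m)).toReal :=
  Lp.norm_toLp _ _

def tFun (hm : 0 < m) (a : EuclideanSpace ℝ (Fin n)) (φ : L2r n m) : L2r n m :=
  mk2 (memℒp_translate hm a φ)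

lemma tFun_coe (hm : 0 < m) (a : EuclideanSpace ℝ (Fin n)) (φ : L2r n m) :
    (tFun hm a φ : EuclideanSpace ℝ (Fin n) → ℂ) =ᵐ[rMeasure m]
      fun p => (φ : EuclideanSpace ℝ (Fin n) → ℂ) (p - a) :=
  mk2_coe _

lemma tFun_add (hm : 0 < m) (a : EuclideanSpace ℝ (Fin n)) (φ ψ : L2r n m) :
    tFun hm a (φ + ψ) = tFun hm a φ + tFun hm a ψ := by
  rw [tFun, tFun, tFun, ← mk2_add (memℒp_translate hm a φ) (memℒp_translate hm a ψ)]
  apply mk2_congr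
  refine (ae_translate hm a (Lp.coeFn_add φ ψ)).trans ?_
  exact Filter.EventuallyEq.rfl

lemma tFun_smul (hm : 0 < m) (a : EuclideanSpace ℝ (Fin n)) (c : ℂ) (φ : L2r n m) :
    tFun hm a (c • φ) = c • tFun hm a φ := by
  rw [tFun, tFun, ← mk2_smul (memℒp_translate hm a φ) c]
  apply mk2_congr
  refine (ae_translate hm a (Lp.coeFn_smul c φ)).trans ?_
  exact Filter.EventuallyEq.rfl

lemma tFun_norm (hm : 0 < m) (a : EuclideanSpace ℝ (Fin n)) (φ : L2r n m) :
    ‖tFun hm a φ‖ ≤ Real.sqrt (1 + ‖a‖ / m) * ‖φ‖ := by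
  rw [tFun, mk2_norm, Lp.norm_def]
  have h := eLpNorm_translate_le hm a (Lp.aestronglyMeasurable φ)
  calc (eLpNorm (fun p => (φ : EuclideanSpace ℝ (Fin n) → ℂ) (p - a)) 2 (rMeasure m)).toReal
      ≤ (ENNReal.ofReal (Real.sqrt (1 + ‖a‖ / m)) *
          eLpNorm (φ : EuclideanSpace ℝ (Fin n) → ℂ) 2 (rMeasure m)).toReal := by
        apply ENNReal.toReal_mono _ h
        exact (ENNReal.mul_lt_top ENNReal.ofReal_lt_top (Lp.eLpNorm_lt_top φ)).ne
    _ = Real.sqrt (1 + ‖a‖ / m) *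
        (eLpNorm (φ : EuclideanSpace ℝ (Fin n) → ℂ) 2 (rMeasure m)).toReal := by
        rw [ENNReal.toReal_mul, ENNReal.toReal_ofReal (Real.sqrt_nonneg _)]

def Top (hm : 0 < m) (a : EuclideanSpace ℝ (Fin n)) : L2r n m →L[ℂ] L2r n m :=
  LinearMap.mkContinuous
    { toFun := tFun hm a
      map_add' := tFun_add hm a
      map_smul' := tFun_smul hm a }
    (Real.sqrt (1 + ‖a‖ / m)) (tFun_norm hm a)

lemma Top_isTransl (hm : 0 < m) (a : EuclideanSpace ℝ (Fin n)) : IsTransl m a (Top hm a) :=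
  fun φ => tFun_coe hm a φ

lemma Top_norm_le (hm : 0 < m) (a : EuclideanSpace ℝ (Fin n)) :
    ‖Top hm a‖ ≤ Real.sqrt (1 + ‖a‖ / m) :=
  LinearMap.mkContinuous_norm_le _ (Real.sqrt_nonneg _) _

lemma IsTransl.unique {a : EuclideanSpace ℝ (Fin n)} {T S : L2r n m →L[ℂ] L2r n m}
    (hT : IsTransl m a T) (hS : IsTransl m a S) : T = S := by
  ext φ : 1
  exact Lp.ext ((hT φ).trans (hS φ).symm)

lemma IsTransl.mul (hm : 0 < m) {a b : EuclideanSpace ℝ (Fin n)}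
    {T S : L2r n m →L[ℂ] L2r n m}
    (hT : IsTransl m a T) (hS : IsTransl m b S) : IsTransl m (a + b) (T * S) := by
  intro φ
  have h1 : (T (S φ) : EuclideanSpace ℝ (Fin n) → ℂ) =ᵐ[rMeasure m]
      fun p => (S φ : EuclideanSpace ℝ (Fin n) → ℂ) (p - a) := hT (S φ)
  have h2 := ae_translate hm a (hS φ)
  refine h1.trans (h2.trans ?_)
  filter_upwards with p
  simp [sub_sub]

lemma IsTransl.eq_one {T : L2r n m →L[ℂ] L2r n m} (hT : IsTransl m 0 T) : T = 1 := by
  have h1 : IsTransl m 0 (1 : L2r n m →L[ℂ] L2r n m) := by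
    intro φ
    simp only [ContinuousLinearMap.one_apply, sub_zero]
    exact Filter.EventuallyEq.rfl
  exact IsTransl.unique hT h1

end CrProof


namespace CrProof

def toE (a : Fin n → ℤ) : EuclideanSpace ℝ (Fin n) :=
  (WithLp.equiv 2 (Fin n → ℝ)).symm fun i => (a i : ℝ)

lemma toE_add (a b : Fin n → ℤ) : toE (n := n) (a + b) = toE a + toE b := by
  rw [toE, toE, toE, WithLp.equiv_symm_apply, ← WithLp.toLp_add]
  congr 1
  funext i
  simp only [Pi.add_apply]
  push_cast
  rfl

lemma toE_zero : toE (n := n) 0 = 0 := by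
  rw [toE, WithLp.equiv_symm_apply, ← WithLp.toLp_zero (p := 2) (V := Fin n → ℝ)]
  congr 1
  funext i
  simp

lemma toE_nsmul (k : ℕ) (a : Fin n → ℤ) : toE (n := n) (k • a) = (k : ℝ) • toE a := by
  rw [toE, toE, WithLp.equiv_symm_apply, ← WithLp.toLp_smul]
  congr 1
  funext i
  simp only [Pi.smul_apply, nsmul_eq_mul, smul_eq_mul]
  push_cast
  ring

lemma norm_toE_nsmul (k : ℕ) (a : Fin n → ℤ) : ‖toE (n := n) (k • a)‖ = k * ‖toE a‖ := by
  rw [toE_nsmul, norm_smul]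
  simp

lemma Top_mem (hm : 0 < m) (a : Fin n → ℤ) : Top hm (toE a) ∈ CrTorus n m :=
  Subalgebra.le_topologicalClosure _
    (Algebra.subset_adjoin ⟨a, Top_isTransl hm (toE a)⟩)

def trop (hm : 0 < m) (a : Fin n → ℤ) : CrTorus n m := ⟨Top hm (toE a), Top_mem hm a⟩

lemma trop_mul (hm : 0 < m) (a b : Fin n → ℤ) :
    trop hm a * trop hm b = trop hm (a + b) := by
  apply Subtype.ext
  have h := IsTransl.mul hm (Top_isTransl hm (toE a)) (Top_isTransl hm (toE b))
  rw [← toE_add] at h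
  exact IsTransl.unique h (Top_isTransl hm (toE (a + b)))

lemma IsTransl.eq_one' {a : EuclideanSpace ℝ (Fin n)} {T : L2r n m →L[ℂ] L2r n m}
    (hT : IsTransl m a T) (ha : a = 0) : T = 1 := by
  subst ha
  exact IsTransl.eq_one hT

lemma trop_zero (hm : 0 < m) : trop hm (0 : Fin n → ℤ) = 1 := by
  apply Subtype.ext
  exact IsTransl.eq_one' (Top_isTransl hm (toE (0 : Fin n → ℤ))) toE_zero

lemma trop_norm_le (hm : 0 < m) (a : Fin n → ℤ) :
    ‖trop hm a‖ ≤ Real.sqrt (1 + ‖toE a‖ / m) :=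
  Top_norm_le hm (toE a)

lemma char_abs_le_gen {A : Type*} [NormedRing A] [NormedAlgebra ℂ A] [CompleteSpace A]
    (S : Subalgebra ℂ A) (hS : IsClosed (S : Set A)) (ω : S →ₐ[ℂ] ℂ) (x : S) :
    ‖ω x‖ ≤ ‖x‖ * ‖(1 : S)‖ := by
  haveI : CompleteSpace S := hS.completeSpace_coe
  exact spectrum.norm_le_norm_mul_of_mem (AlgHom.apply_mem_spectrum ω x)

lemma char_abs_le (hm : 0 < m) (ω : CrTorus n m →ₐ[ℂ] ℂ) (A : CrTorus n m) :
    ‖ω A‖ ≤ ‖A‖ := by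
  have h := char_abs_le_gen (CrTorus n m) (Subalgebra.isClosed_topologicalClosure _) ω A
  have h1 : ‖(1 : CrTorus n m)‖ ≤ 1 := by
    have h2 : ‖(1 : CrTorus n m)‖ = ‖(1 : L2r n m →L[ℂ] L2r n m)‖ := rfl
    rw [h2, ContinuousLinearMap.one_def]
    exact ContinuousLinearMap.norm_id_le
  calc ‖ω A‖ ≤ ‖A‖ * ‖(1 : CrTorus n m)‖ := h
    _ ≤ ‖A‖ * 1 := mul_le_mul_of_nonneg_left h1 (norm_nonneg _)
    _ = ‖A‖ := mul_one _

lemma le_one_of_pow_le_sqrt {r c : ℝ} (hr : 0 ≤ r) (hc : 0 ≤ c)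
    (h : ∀ k : ℕ, r ^ k ≤ Real.sqrt (1 + k * c)) : r ≤ 1 := by
  by_contra hr1
  push_neg at hr1
  set s : ℝ := r ^ 2 - 1 with hs
  have hs0 : 0 < s := by nlinarith
  have key : ∀ k : ℕ, (1 + k * s) ^ 2 ≤ 1 + (2 * k) * c := by
    intro k
    have h1 : r ^ (2 * k) ≤ Real.sqrt (1 + (2 * k) * c) := by
      have := h (2 * k)
      push_cast at this ⊢
      linarith
    have h2 : (1 + k * s) ≤ r ^ (2 * k) := by
      have hpow : r ^ (2 * k) = (1 + s) ^ k := by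
        rw [show (1:ℝ) + s = r ^ 2 by rw [hs]; ring, ← pow_mul]
      rw [hpow]
      have := one_add_mul_le_pow (by nlinarith : (-2:ℝ) ≤ s) k
      linarith [this]
    have h3 : (0:ℝ) ≤ 1 + (2 * k) * c := by positivity
    have h4 : (r ^ (2 * k)) ^ 2 ≤ 1 + (2 * k) * c := by
      have hsq := Real.sq_sqrt h3
      nlinarith [Real.sqrt_nonneg (1 + (2 * k) * c), pow_nonneg hr (2 * k)]
    have h5 : (0:ℝ) ≤ 1 + k * s := by positivity
    nlinarith
  set k : ℕ := ⌈2 * c / s ^ 2⌉₊ + 1 with hk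
  have hk1 : 2 * c / s ^ 2 < (k : ℝ) := by
    have h6 := Nat.le_ceil (2 * c / s ^ 2)
    have h7 : ((⌈2 * c / s ^ 2⌉₊ : ℝ)) < k := by
      rw [hk]; push_cast; linarith
    linarith
  have hk2 : 2 * c < k * s ^ 2 := by
    rw [div_lt_iff₀ (by positivity)] at hk1
    linarith
  have hkk := key k
  have hk3 : (1:ℝ) ≤ k := by
    rw [hk]; push_cast
    linarith [Nat.cast_nonneg (α := ℝ) ⌈2 * c / s ^ 2⌉₊]
  nlinarith [mul_lt_mul_of_pos_left hk2 (show (0:ℝ) < k by linarith),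
    mul_pos (show (0:ℝ) < k by linarith) hs0]

end CrProof


open CrProof in
/-- every multiplicative linear functional (character) `ω` on `C_r(𝕋ⁿ)`
sends each generator `T_{e_i}` into the unit circle, and is given by evaluation at a
point of `𝕋ⁿ`: there is `x ∈ ℝⁿ` with `ω(T_a) = e^{i a·x}` for all `a ∈ ℤⁿ`; hence the
maximal ideal space of `C_r(𝕋ⁿ)` is `𝕋ⁿ`. -/
theorem CrTorus_characters {n : ℕ} (m : ℝ) (hm : 0 < m)
    (ω : CrTorus n m →ₐ[ℂ] ℂ) :
    (∀ (i : Fin n) (T : L2r n m →L[ℂ] L2r n m) (hT : T ∈ CrTorus n m),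
      IsTransl m (EuclideanSpace.single i 1) T → ‖ω ⟨T, hT⟩‖ = 1) ∧
    ∃ x : Fin n → ℝ, ∀ (a : Fin n → ℤ) (T : L2r n m →L[ℂ] L2r n m)
      (hT : T ∈ CrTorus n m),
      IsTransl m ((WithLp.equiv 2 (Fin n → ℝ)).symm fun i => (a i : ℝ)) T →
      ω ⟨T, hT⟩ = Complex.exp (Complex.I * ((∑ i, a i * x i : ℝ) : ℂ)) := by
  classical
  set z : (Fin n → ℤ) → ℂ := fun a => ω (trop hm a) with hz
  have hzmul : ∀ a b : Fin n → ℤ, z a * z b = z (a + b) := by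
    intro a b
    simp only [hz]
    rw [← map_mul, trop_mul]
  have hz0 : z 0 = 1 := by
    simp only [hz]
    rw [trop_zero, map_one]
  have hzabs_le : ∀ a : Fin n → ℤ,
      ‖z a‖ ≤ Real.sqrt (1 + ‖toE (n := n) a‖ / m) := fun a =>
    (char_abs_le hm ω _).trans (trop_norm_le hm a)
  have hpow : ∀ (a : Fin n → ℤ) (k : ℕ), z a ^ k = z (k • a) := by
    intro a k
    induction k with
    | zero => simpa using hz0.symm
    | succ k ih => rw [pow_succ, ih, hzmul, succ_nsmul]
  have hle1 : ∀ a : Fin n → ℤ, ‖z a‖ ≤ 1 := by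
    intro a
    apply le_one_of_pow_le_sqrt (norm_nonneg _)
      (show (0:ℝ) ≤ ‖toE (n := n) a‖ / m by positivity)
    intro k
    calc ‖z a‖ ^ k = ‖z a ^ k‖ := (norm_pow _ _).symm
      _ = ‖z (k • a)‖ := by rw [hpow]
      _ ≤ Real.sqrt (1 + ‖toE (n := n) (k • a)‖ / m) := hzabs_le _
      _ = Real.sqrt (1 + k * (‖toE (n := n) a‖ / m)) := by
          rw [norm_toE_nsmul, mul_div_assoc]
  have habs1 : ∀ a : Fin n → ℤ, ‖z a‖ = 1 := by
    intro a
    have h1 := hle1 a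
    have h2 := hle1 (-a)
    have h3 : z a * z (-a) = 1 := by rw [hzmul, add_neg_cancel, hz0]
    have h4 : ‖z a‖ * ‖z (-a)‖ = 1 := by
      rw [← norm_mul, h3, norm_one]
    nlinarith [norm_nonneg (z a), norm_nonneg (z (-a))]
  have hzne : ∀ a : Fin n → ℤ, z a ≠ 0 := by
    intro a h
    have h5 := habs1 a
    rw [h] at h5
    simp at h5
  have hex : ∀ i : Fin n, ∃ θ : ℝ, Complex.exp (θ * Complex.I) = z (Pi.single i 1) :=
    fun i => (Complex.norm_eq_one_iff _).mp (habs1 _)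
  choose x hx using hex
  have hzpow : ∀ (a : Fin n → ℤ) (k : ℤ), z (k • a) = z a ^ k := by
    intro a k
    induction k using Int.induction_on with
    | zero => simpa using hz0
    | succ i ih =>
        have h5 : ((i:ℤ) + 1) • a = (i:ℤ) • a + a := by rw [add_smul, one_smul]
        rw [h5, ← hzmul, ih, zpow_add_one₀ (hzne a)]
    | pred i ih =>
        have h5 : (-(i:ℤ) - 1) • a + a = (-(i:ℤ)) • a := by
          rw [sub_smul, one_smul, sub_add_cancel]
        have h6 : z ((-(i:ℤ) - 1) • a) * z a = z a ^ (-(i:ℤ)) := by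
          rw [hzmul, h5, ih]
        have h7 : z ((-(i:ℤ) - 1) • a) = z a ^ (-(i:ℤ)) / z a := by
          rw [eq_div_iff (hzne a), h6]
        rw [h7, div_eq_mul_inv, ← zpow_sub_one₀ (hzne a)]
  have hsingle : ∀ (i : Fin n) (k : ℤ), Pi.single i k = k • (Pi.single i 1 : Fin n → ℤ) := by
    intro i k
    funext j
    by_cases h : j = i
    · subst h
      simp
    · simp [Pi.single_apply, h]
  have hsum : ∀ (s : Finset (Fin n)) (g : Fin n → Fin n → ℤ),
      z (∑ i ∈ s, g i) = ∏ i ∈ s, z (g i) := by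
    intro s g
    induction s using Finset.induction_on with
    | empty => simpa using hz0
    | insert _ _ hnotmem ih =>
        rw [Finset.sum_insert hnotmem, Finset.prod_insert hnotmem, ← hzmul, ih]
  have claim : ∀ a : Fin n → ℤ, z a = Complex.exp (Complex.I * ((∑ i, a i * x i : ℝ) : ℂ)) := by
    intro a
    have h8 : z a = ∏ i, z (Pi.single i (a i)) := by
      conv_lhs => rw [← Finset.univ_sum_single a]
      exact hsum Finset.univ fun i => Pi.single i (a i)
    rw [h8]
    have h9 : ∀ i : Fin n, z (Pi.single i (a i)) =
        Complex.exp (((a i : ℝ) * x i : ℝ) * Complex.I) := by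
      intro i
      rw [hsingle i (a i), hzpow, ← hx i, ← Complex.exp_int_mul]
      congr 1
      push_cast
      ring
    rw [Finset.prod_congr rfl fun i _ => h9 i, ← Complex.exp_sum]
    congr 1
    push_cast
    rw [← Finset.sum_mul]
    ring
  constructor
  · intro i T hT hTr
    have he : toE (Pi.single i 1 : Fin n → ℤ) = EuclideanSpace.single i (1:ℝ) := by
      rw [toE, EuclideanSpace.single, WithLp.equiv_symm_apply, PiLp.single]
      congr 1
      funext j
      by_cases h : j = i
      · subst h; simp
      · simp [Pi.single_apply, h]
    have hT' : IsTransl m (toE (Pi.single i 1 : Fin n → ℤ)) T := by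
      rw [he]; exact hTr
    have heq : (⟨T, hT⟩ : CrTorus n m) = trop hm (Pi.single i 1) :=
      Subtype.ext (IsTransl.unique hT' (Top_isTransl hm _))
    rw [heq]
    exact habs1 _
  · refine ⟨x, ?_⟩
    intro a T hT hTr
    have heq : (⟨T, hT⟩ : CrTorus n m) = trop hm a :=
      Subtype.ext (IsTransl.unique hTr (Top_isTransl hm _))
    rw [heq]
    exact claim a
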